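/- arXiv:1001.1114 — 4 statements merged into one kernel-verified Lean document; each statement's English description precedes it below -/
import Mathlib

section
/- For every integer i with 2 ≤ i ≤ g − 2, the element x = a_1∧b_1∧a_3∧a_4∧⋯∧a_{i+2} ∈ ⋀^{i+2} H satisfies C_i(C_{i+2}(x)) = 0 but C_{i+2}(x) ≠ 0; that is, x lies in the kernel of the composition C_i ∘ C_{i+2} but does not lie in the kernel of C_{i+2}. -/
/-- The `2g`-dimensional rational vector space `H = ℚ^{2g}`, with basis indexed by
`Fin g ⊕ Fin g`: `Sum.inl j` corresponds to `a_{j+1}` and `Sum.inr j` to `b_{j+1}`. -/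
abbrev HH (g : ℕ) : Type := (Fin g ⊕ Fin g) → ℚ

/-- The basis vector `a_{j+1}` of `H`. -/
def aa (g : ℕ) (j : Fin g) : HH g := Pi.single (Sum.inl j) 1

/-- The basis vector `b_{j+1}` of `H`. -/
def bb (g : ℕ) (j : Fin g) : HH g := Pi.single (Sum.inr j) 1

/-- The standard symplectic form `ω` on `H`. -/
def omg (g : ℕ) (x y : HH g) : ℚ :=
  ∑ j : Fin g, (x (Sum.inl j) * y (Sum.inr j) - x (Sum.inr j) * y (Sum.inl j))

/-- The wedge `x_1 ∧ ⋯ ∧ x_k`, as an element of the `k`-th exterior power `⋀^k H`. -/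
noncomputable def wedge (g k : ℕ) (v : Fin k → HH g) : ⋀[ℚ]^k (HH g) :=
  ⟨ExteriorAlgebra.ιMulti ℚ k v, ExteriorAlgebra.ιMulti_range ℚ k (Set.mem_range_self v)⟩

/-- Given a `k`-tuple `v` and indices `j < l`, the `(k-2)`-tuple obtained from `v` by
omitting the entries at positions `j` and `l`. -/
def remove2 {α : Type*} {k : ℕ} (v : Fin k → α) (j l : Fin k) : Fin (k - 2) → α :=
  fun t => v ⟨if (t : ℕ) < (j : ℕ) then (t : ℕ)
      else if (t : ℕ) + 1 < (l : ℕ) then (t : ℕ) + 1 else (t : ℕ) + 2, by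
    have ht := t.isLt
    have hl := l.isLt
    split_ifs <;> omega⟩

/-- The value `F(x_1, …, x_k) = Σ_{j<l} (-1)^{j+l+1} ω(x_j, x_l) ·
x_1 ∧ ⋯ ∧ x̂_j ∧ ⋯ ∧ x̂_l ∧ ⋯ ∧ x_k ∈ ⋀^{k-2} H`. (Indices are 0-based here, which
yields the same signs as the 1-based formula.) -/
noncomputable def contractExpr (g k : ℕ) (v : Fin k → HH g) : ⋀[ℚ]^(k - 2) (HH g) :=
  ∑ p ∈ Finset.univ.filter (fun p : Fin k × Fin k => (p.1 : ℕ) < (p.2 : ℕ)),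
    ((-1 : ℚ) ^ ((p.1 : ℕ) + (p.2 : ℕ) + 1) * omg g (v p.1) (v p.2)) •
      wedge g (k - 2) (remove2 v p.1 p.2)

/-- `IsContraction g k C` says that `C : ⋀^k H → ⋀^{k-2} H` is the contraction `C_k`,
i.e. the (unique) linear map satisfying the defining formula on wedges. -/
def IsContraction (g k : ℕ) (C : ⋀[ℚ]^k (HH g) →ₗ[ℚ] ⋀[ℚ]^(k - 2) (HH g)) : Prop :=
  ∀ v : Fin k → HH g, C (wedge g k v) = contractExpr g k v

lemma mapAlg_mem (g k : ℕ) (S : HH g →ₗ[ℚ] HH g) {x : ExteriorAlgebra ℚ (HH g)}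
    (hx : x ∈ ⋀[ℚ]^k (HH g)) : ExteriorAlgebra.map S x ∈ ⋀[ℚ]^k (HH g) := by
  rw [← ExteriorAlgebra.ιMulti_span_fixedDegree] at hx ⊢
  have h : Submodule.map (ExteriorAlgebra.map S).toLinearMap
      (Submodule.span ℚ (Set.range (ExteriorAlgebra.ιMulti ℚ k))) ≤
      Submodule.span ℚ (Set.range (ExteriorAlgebra.ιMulti ℚ k (M := HH g))) := by
    rw [Submodule.map_span, Submodule.span_le]
    rintro _ ⟨_, ⟨v, rfl⟩, rfl⟩
    exact Submodule.subset_span ⟨S ∘ v, (ExteriorAlgebra.map_apply_ιMulti S v).symm⟩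
  exact h (Submodule.mem_map_of_mem hx)

/-- The linear map `⋀^k S : ⋀^k H → ⋀^k H` induced by a linear map `S : H → H`. -/
noncomputable def powMap (g k : ℕ) (S : HH g →ₗ[ℚ] HH g) :
    ⋀[ℚ]^k (HH g) →ₗ[ℚ] ⋀[ℚ]^k (HH g) :=
  (ExteriorAlgebra.map S).toLinearMap.restrict fun _ hx => mapAlg_mem g k S hx

lemma omg_aa_aa (g : ℕ) (j k : Fin g) : omg g (aa g j) (aa g k) = 0 := by
  simp [omg, aa, Pi.single_apply]

lemma omg_aa_bb (g : ℕ) (j k : Fin g) : omg g (aa g j) (bb g k) = if j = k then 1 else 0 := by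
  simp [omg, aa, bb, Pi.single_apply, eq_comm]

lemma omg_bb_aa (g : ℕ) (j k : Fin g) : omg g (bb g j) (aa g k) = if j = k then -1 else 0 := by
  simp [omg, aa, bb, Pi.single_apply, eq_comm]
  split_ifs <;> simp

/-- wedge of linearly-independent-looking `aa` vectors is nonzero. -/
lemma wedge_aa_ne_zero (g k : ℕ) (f : Fin k → Fin g) (hf : Function.Injective f) :
    wedge g k (fun t => aa g (f t)) ≠ 0 := by
  intro h
  have hval : ExteriorAlgebra.ιMulti ℚ k (fun t => aa g (f t)) = 0 := by
    have := congrArg Subtype.val h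
    simpa [wedge] using this
  -- alternating map: determinant of coordinates at the indices `f t`
  set T : HH g →ₗ[ℚ] (Fin k → ℚ) :=
    LinearMap.pi (fun t => LinearMap.proj (Sum.inl (f t))) with hT
  set F : ∀ n, (HH g) [⋀^Fin n]→ₗ[ℚ] ℚ :=
    Function.update (fun n => (0 : (HH g) [⋀^Fin n]→ₗ[ℚ] ℚ)) k
      (Matrix.detRowAlternating.compLinearMap T) with hF
  have h1 : ExteriorAlgebra.liftAlternating F (ExteriorAlgebra.ιMulti ℚ k
      (fun t => aa g (f t))) = 0 := by rw [hval]; simp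
  rw [ExteriorAlgebra.liftAlternating_apply_ιMulti] at h1
  have hFk : F k = Matrix.detRowAlternating.compLinearMap T := by
    rw [hF]; exact Function.update_self _ _ _
  rw [hFk] at h1
  rw [AlternatingMap.compLinearMap_apply] at h1
  have hmat : (fun t => T (aa g (f t))) = (1 : Matrix (Fin k) (Fin k) ℚ) := by
    funext s t
    simp only [hT, LinearMap.pi_apply, LinearMap.proj_apply, aa, Pi.single_apply,
      Matrix.one_apply]
    simp only [Sum.inl.injEq]
    by_cases hst : s = t
    · simp [hst]
    · rw [if_neg hst, if_neg]
      intro hc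
      exact hst (hf hc.symm)
  rw [hmat] at h1
  have h2 : (1 : Matrix (Fin k) (Fin k) ℚ).det = 0 := h1
  simp at h2

/-- For `2 ≤ i ≤ g - 2`, the element `x = a_1∧b_1∧a_3∧⋯∧a_{i+2} ∈ ⋀^{i+2} H`
satisfies `C_i (C_{i+2} x) = 0` but `C_{i+2} x ≠ 0`: it lies in the kernel of
`C_i ∘ C_{i+2}` but not in the kernel of `C_{i+2}`. -/
theorem statement4 (g : ℕ) (hg : 2 ≤ g) (i : ℕ) (hi1 : 2 ≤ i) (hi2 : i ≤ g - 2)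
    (C2 : ⋀[ℚ]^(i + 2) (HH g) →ₗ[ℚ] ⋀[ℚ]^(i + 2 - 2) (HH g))
    (hC2 : IsContraction g (i + 2) C2)
    (C1 : ⋀[ℚ]^i (HH g) →ₗ[ℚ] ⋀[ℚ]^(i - 2) (HH g)) (hC1 : IsContraction g i C1) :
    C1 (C2 (wedge g (i + 2) fun j =>
        if (j : ℕ) = 0 then aa g ⟨0, by omega⟩
        else if (j : ℕ) = 1 then bb g ⟨0, by omega⟩
        else aa g ⟨(j : ℕ), by have := j.isLt; omega⟩)) = 0 ∧
    C2 (wedge g (i + 2) fun j =>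
        if (j : ℕ) = 0 then aa g ⟨0, by omega⟩
        else if (j : ℕ) = 1 then bb g ⟨0, by omega⟩
        else aa g ⟨(j : ℕ), by have := j.isLt; omega⟩) ≠ 0 := by
  have hgi : i + 2 ≤ g := by omega
  set v : Fin (i + 2) → HH g := fun j =>
    if (j : ℕ) = 0 then aa g ⟨0, by omega⟩
    else if (j : ℕ) = 1 then bb g ⟨0, by omega⟩
    else aa g ⟨(j : ℕ), by have := j.isLt; omega⟩ with hv
  set w : Fin i → HH g := fun t => aa g ⟨(t : ℕ) + 2, by have := t.isLt; omega⟩ with hw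
  -- Step 1: C2 (wedge v) = wedge w
  have key : C2 (wedge g (i + 2) v) = wedge g (i + 2 - 2) (fun t => aa g
      ⟨(t : ℕ) + 2, by have := t.isLt; omega⟩) := by
    rw [hC2 v, contractExpr]
    set p0 : Fin (i + 2) × Fin (i + 2) := (⟨0, by omega⟩, ⟨1, by omega⟩) with hp0
    rw [Finset.sum_eq_single_of_mem p0 (by simp [hp0])]
    · have h01 : omg g (v p0.1) (v p0.2) = 1 := by
        simp only [hv, hp0]
        norm_num
        rw [omg_aa_bb]
        simp
      rw [h01]
      rw [mul_one]
      have hsgn : ((-1 : ℚ)) ^ ((p0.1 : ℕ) + (p0.2 : ℕ) + 1) = 1 := by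
        simp [hp0]
      rw [hsgn, one_smul]
      congr 1
    · rintro ⟨j, l⟩ hmem hne
      simp only [Finset.mem_filter] at hmem
      have hjl : (j : ℕ) < (l : ℕ) := hmem.2
      have hzero : omg g (v j) (v l) = 0 := by
        have hne' : ¬((j : ℕ) = 0 ∧ (l : ℕ) = 1) := by
          intro ⟨h1, h2⟩
          apply hne
          simp only [hp0, Prod.mk.injEq]
          constructor <;> [exact Fin.ext h1; exact Fin.ext h2]
        simp only [hv]
        by_cases hj0 : (j : ℕ) = 0
        · by_cases hl1 : (l : ℕ) = 1
          · exact absurd ⟨hj0, hl1⟩ hne'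
          · have hl0 : ¬((l : ℕ) = 0) := by omega
            rw [if_pos hj0, if_neg hl0, if_neg hl1, omg_aa_aa]
        · by_cases hj1 : (j : ℕ) = 1
          · have hl : 2 ≤ (l : ℕ) := by omega
            rw [if_neg hj0, if_pos hj1, if_neg (by omega : ¬((l : ℕ) = 0)),
              if_neg (by omega : ¬((l : ℕ) = 1)), omg_bb_aa, if_neg]
            intro hc
            have := Fin.val_eq_of_eq hc
            simp at this
            omega
          · rw [if_neg hj0, if_neg hj1, if_neg (by omega : ¬((l : ℕ) = 0)),
              if_neg (by omega : ¬((l : ℕ) = 1)), omg_aa_aa]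
      rw [hzero, mul_zero, zero_smul]
  constructor
  · rw [key]
    show C1 (wedge g i w) = 0
    rw [hC1 w, contractExpr]
    apply Finset.sum_eq_zero
    intro p _
    rw [hw]
    rw [omg_aa_aa, mul_zero, zero_smul]
  · rw [key]
    apply wedge_aa_ne_zero
    intro s t hst
    have := Fin.val_eq_of_eq hst
    simp at this
    exact Fin.ext this
end

section
/- Let i be an even integer with 4 ≤ i ≤ g, and set y = a_1∧b_1∧a_g∧b_g∧a_2∧a_3∧⋯∧a_{i−2}∧a_{g−1} ∈ ⋀^{i+2} H. Then C_i(C_{i+2}(y)) = 2·a_2∧a_3∧⋯∧a_{i−2}∧a_{g−1}, which is nonzero, and C_{i−2}(C_i(C_{i+2}(y))) = 0; that is, y lies in the kernel of C_{i−2} ∘ C_i ∘ C_{i+2} but not in the kernel of C_i ∘ C_{i+2}. -/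
lemma omg_bb_bb (g : ℕ) (j k : Fin g) : omg g (bb g j) (bb g k) = 0 := by
  simp [omg, bb, Pi.single_apply]

lemma contract_zero (g k : ℕ) (v : Fin k → HH g)
    (h : ∀ p : Fin k × Fin k, (p.1 : ℕ) < (p.2 : ℕ) → omg g (v p.1) (v p.2) = 0) :
    contractExpr g k v = 0 := by
  apply Finset.sum_eq_zero
  intro p hp
  rw [h p (Finset.mem_filter.mp hp).2, mul_zero, zero_smul]

lemma contract_one (g k : ℕ) (hk : 2 ≤ k) (v : Fin k → HH g)
    (h : ∀ p : Fin k × Fin k, (p.1 : ℕ) < (p.2 : ℕ) →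
        ¬((p.1 : ℕ) = 0 ∧ (p.2 : ℕ) = 1) → omg g (v p.1) (v p.2) = 0) :
    contractExpr g k v =
      omg g (v ⟨0, by omega⟩) (v ⟨1, by omega⟩) •
        wedge g (k - 2) (remove2 v ⟨0, by omega⟩ ⟨1, by omega⟩) := by
  rw [contractExpr]
  rw [Finset.sum_eq_single (⟨⟨0, by omega⟩, ⟨1, by omega⟩⟩ : Fin k × Fin k)]
  · norm_num
  · intro p hp hne
    rw [h p (Finset.mem_filter.mp hp).2 ?_, mul_zero, zero_smul]
    rintro ⟨h0, h1⟩
    exact hne (Prod.ext (Fin.ext h0) (Fin.ext h1))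
  · intro habs
    exact absurd (Finset.mem_filter.mpr ⟨Finset.mem_univ _, by norm_num⟩) habs

lemma contract_two (g k : ℕ) (hk : 4 ≤ k) (v : Fin k → HH g)
    (h : ∀ p : Fin k × Fin k, (p.1 : ℕ) < (p.2 : ℕ) →
        ¬((p.1 : ℕ) = 0 ∧ (p.2 : ℕ) = 1) → ¬((p.1 : ℕ) = 2 ∧ (p.2 : ℕ) = 3) →
        omg g (v p.1) (v p.2) = 0) :
    contractExpr g k v =
      omg g (v ⟨0, by omega⟩) (v ⟨1, by omega⟩) •
        wedge g (k - 2) (remove2 v ⟨0, by omega⟩ ⟨1, by omega⟩) +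
      omg g (v ⟨2, by omega⟩) (v ⟨3, by omega⟩) •
        wedge g (k - 2) (remove2 v ⟨2, by omega⟩ ⟨3, by omega⟩) := by
  rw [contractExpr]
  set p01 : Fin k × Fin k := ⟨⟨0, by omega⟩, ⟨1, by omega⟩⟩ with hp01
  set p23 : Fin k × Fin k := ⟨⟨2, by omega⟩, ⟨3, by omega⟩⟩ with hp23
  have hne : p01 ≠ p23 := by
    simp [hp01, hp23, Prod.ext_iff, Fin.ext_iff]
  have hsub : ({p01, p23} : Finset (Fin k × Fin k)) ⊆
      Finset.univ.filter (fun p : Fin k × Fin k => (p.1 : ℕ) < (p.2 : ℕ)) := by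
    intro x hx
    rcases Finset.mem_insert.mp hx with rfl | hx
    · exact Finset.mem_filter.mpr ⟨Finset.mem_univ _, by norm_num⟩
    · rw [Finset.mem_singleton.mp hx]
      exact Finset.mem_filter.mpr ⟨Finset.mem_univ _, by norm_num⟩
  rw [← Finset.sum_subset hsub ?van]
  · rw [Finset.sum_pair hne]
    norm_num [hp01, hp23]
  · intro p hp hnp
    have h1 : p ≠ p01 := by rintro rfl; exact hnp (Finset.mem_insert_self _ _)
    have h2 : p ≠ p23 := by
      rintro rfl; exact hnp (Finset.mem_insert_of_mem (Finset.mem_singleton_self _))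
    rw [h p (Finset.mem_filter.mp hp).2 ?_ ?_, mul_zero, zero_smul]
    · rintro ⟨h0, h1'⟩
      exact h1 (Prod.ext (Fin.ext h0) (Fin.ext h1'))
    · rintro ⟨h0, h1'⟩
      exact h2 (Prod.ext (Fin.ext h0) (Fin.ext h1'))

lemma wedge_ne_zero (g k : ℕ) (idx : Fin k → (Fin g ⊕ Fin g))
    (hinj : Function.Injective idx) :
    wedge g k (fun t => Pi.single (idx t) 1) ≠ 0 := by
  intro hzero
  have h0 : ExteriorAlgebra.ιMulti ℚ k (fun t => (Pi.single (idx t) 1 : HH g)) = 0 :=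
    congrArg Subtype.val hzero
  set A : (HH g) [⋀^Fin k]→ₗ[ℚ] ℚ :=
    (Matrix.detRowAlternating (n := Fin k) (R := ℚ)).compLinearMap
      (LinearMap.funLeft ℚ ℚ idx) with hA
  set F : ∀ n, (HH g) [⋀^Fin n]→ₗ[ℚ] ℚ := fun n => if h : n = k then h ▸ A else 0 with hF
  have key := ExteriorAlgebra.liftAlternating_apply_ιMulti F
    (fun t => (Pi.single (idx t) 1 : HH g))
  rw [h0, map_zero] at key
  have hFk : F k = A := by simp [hF]
  rw [hFk] at key
  have hM : (Matrix.of fun s t => (Pi.single (idx s) 1 : HH g) (idx t)) =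
      (1 : Matrix (Fin k) (Fin k) ℚ) := by
    ext s t
    simp only [Matrix.of_apply, Matrix.one_apply, Pi.single_apply]
    by_cases hst : s = t
    · simp [hst]
    · rw [if_neg hst, if_neg (fun h : idx t = idx s => hst (hinj h.symm))]
  have hdet : A (fun t => (Pi.single (idx t) 1 : HH g)) = 1 := by
    have hrfl : A (fun t => (Pi.single (idx t) 1 : HH g)) =
        Matrix.det (Matrix.of fun s t => (Pi.single (idx s) 1 : HH g) (idx t)) := rfl
    rw [hrfl, hM, Matrix.det_one]
  rw [hdet] at key
  exact one_ne_zero key.symm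

lemma app_congr {α : Type*} {k : ℕ} (v : Fin k → α) {x y : ℕ} {hx : x < k} {hy : y < k}
    (h : x = y) : v ⟨x, hx⟩ = v ⟨y, hy⟩ := by subst h; rfl


set_option maxHeartbeats 2000000

/-- Let `i` be even with `4 ≤ i ≤ g`, and let
`y = a_1∧b_1∧a_g∧b_g∧a_2∧a_3∧⋯∧a_{i-2}∧a_{g-1} ∈ ⋀^{i+2} H`.  Then
`C_i (C_{i+2} y) = 2 · a_2∧a_3∧⋯∧a_{i-2}∧a_{g-1}`, which is nonzero, and
`C_{i-2} (C_i (C_{i+2} y)) = 0`: `y` lies in the kernel of `C_{i-2} ∘ C_i ∘ C_{i+2}`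
but not in the kernel of `C_i ∘ C_{i+2}`. -/
theorem statement8 (g : ℕ) (hg : 4 ≤ g) (i : ℕ) (hieven : Even i)
    (hi1 : 4 ≤ i) (hi2 : i ≤ g)
    (C2 : ⋀[ℚ]^(i + 2) (HH g) →ₗ[ℚ] ⋀[ℚ]^(i + 2 - 2) (HH g))
    (hC2 : IsContraction g (i + 2) C2)
    (C1 : ⋀[ℚ]^i (HH g) →ₗ[ℚ] ⋀[ℚ]^(i - 2) (HH g)) (hC1 : IsContraction g i C1)
    (C0 : ⋀[ℚ]^(i - 2) (HH g) →ₗ[ℚ] ⋀[ℚ]^(i - 2 - 2) (HH g))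
    (hC0 : IsContraction g (i - 2) C0) :
    C1 (C2 (wedge g (i + 2) fun j =>
        if (j : ℕ) = 0 then aa g ⟨0, by omega⟩
        else if (j : ℕ) = 1 then bb g ⟨0, by omega⟩
        else if (j : ℕ) = 2 then aa g ⟨g - 1, by omega⟩
        else if (j : ℕ) = 3 then bb g ⟨g - 1, by omega⟩
        else if (j : ℕ) = i + 1 then aa g ⟨g - 2, by omega⟩
        else aa g ⟨(j : ℕ) - 3, by have := j.isLt; omega⟩)) =
      (2 : ℚ) • wedge g (i - 2) (fun t =>
        if (t : ℕ) = i - 3 then aa g ⟨g - 2, by omega⟩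
        else aa g ⟨(t : ℕ) + 1, by have := t.isLt; omega⟩) ∧
    (2 : ℚ) • wedge g (i - 2) (fun t =>
        if (t : ℕ) = i - 3 then aa g ⟨g - 2, by omega⟩
        else aa g ⟨(t : ℕ) + 1, by have := t.isLt; omega⟩) ≠ 0 ∧
    C0 (C1 (C2 (wedge g (i + 2) fun j =>
        if (j : ℕ) = 0 then aa g ⟨0, by omega⟩
        else if (j : ℕ) = 1 then bb g ⟨0, by omega⟩
        else if (j : ℕ) = 2 then aa g ⟨g - 1, by omega⟩
        else if (j : ℕ) = 3 then bb g ⟨g - 1, by omega⟩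
        else if (j : ℕ) = i + 1 then aa g ⟨g - 2, by omega⟩
        else aa g ⟨(j : ℕ) - 3, by have := j.isLt; omega⟩))) = 0 := by
  set V : Fin (i + 2) → HH g := fun j =>
        if (j : ℕ) = 0 then aa g ⟨0, by omega⟩
        else if (j : ℕ) = 1 then bb g ⟨0, by omega⟩
        else if (j : ℕ) = 2 then aa g ⟨g - 1, by omega⟩
        else if (j : ℕ) = 3 then bb g ⟨g - 1, by omega⟩
        else if (j : ℕ) = i + 1 then aa g ⟨g - 2, by omega⟩
        else aa g ⟨(j : ℕ) - 3, by have := j.isLt; omega⟩ with hV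
  set u1 : Fin i → HH g := fun t =>
        if (t : ℕ) = 0 then aa g ⟨g - 1, by omega⟩
        else if (t : ℕ) = 1 then bb g ⟨g - 1, by omega⟩
        else if (t : ℕ) = i - 1 then aa g ⟨g - 2, by omega⟩
        else aa g ⟨(t : ℕ) - 1, by have := t.isLt; omega⟩ with hu1
  set u2 : Fin i → HH g := fun t =>
        if (t : ℕ) = 0 then aa g ⟨0, by omega⟩
        else if (t : ℕ) = 1 then bb g ⟨0, by omega⟩
        else if (t : ℕ) = i - 1 then aa g ⟨g - 2, by omega⟩
        else aa g ⟨(t : ℕ) - 1, by have := t.isLt; omega⟩ with hu2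
  set T : Fin (i - 2) → HH g := fun t =>
        if (t : ℕ) = i - 3 then aa g ⟨g - 2, by omega⟩
        else aa g ⟨(t : ℕ) + 1, by have := t.isLt; omega⟩ with hT
  -- vanishing of the symplectic form away from the two distinguished pairs, for V
  have hvanV : ∀ p : Fin (i + 2) × Fin (i + 2), (p.1 : ℕ) < (p.2 : ℕ) →
      ¬((p.1 : ℕ) = 0 ∧ (p.2 : ℕ) = 1) → ¬((p.1 : ℕ) = 2 ∧ (p.2 : ℕ) = 3) →
      omg g (V p.1) (V p.2) = 0 := by
    intro p hlt h01 h23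
    have h1 := p.1.isLt
    have h2 := p.2.isLt
    simp only [hV]
    split_ifs <;>
      simp only [omg_aa_aa, omg_bb_bb, omg_aa_bb, omg_bb_aa, Fin.mk.injEq] <;>
      first
        | rfl
        | (rw [if_neg (by omega)])
        | (exfalso; omega)
  have hvan1 : ∀ p : Fin i × Fin i, (p.1 : ℕ) < (p.2 : ℕ) →
      ¬((p.1 : ℕ) = 0 ∧ (p.2 : ℕ) = 1) → omg g (u1 p.1) (u1 p.2) = 0 := by
    intro p hlt h01
    have h1 := p.1.isLt
    have h2 := p.2.isLt
    simp only [hu1]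
    split_ifs <;>
      simp only [omg_aa_aa, omg_bb_bb, omg_aa_bb, omg_bb_aa, Fin.mk.injEq] <;>
      first
        | rfl
        | (rw [if_neg (by omega)])
        | (exfalso; omega)
  have hvan2 : ∀ p : Fin i × Fin i, (p.1 : ℕ) < (p.2 : ℕ) →
      ¬((p.1 : ℕ) = 0 ∧ (p.2 : ℕ) = 1) → omg g (u2 p.1) (u2 p.2) = 0 := by
    intro p hlt h01
    have h1 := p.1.isLt
    have h2 := p.2.isLt
    simp only [hu2]
    split_ifs <;>
      simp only [omg_aa_aa, omg_bb_bb, omg_aa_bb, omg_bb_aa, Fin.mk.injEq] <;>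
      first
        | rfl
        | (rw [if_neg (by omega)])
        | (exfalso; omega)
  -- identify the tuples obtained by removing the distinguished pairs
  have hrA : remove2 V (⟨0, by omega⟩ : Fin (i + 2)) ⟨1, by omega⟩ = u1 := by
    funext t
    have ht := t.isLt
    have h2 : remove2 V (⟨0, by omega⟩ : Fin (i + 2)) ⟨1, by omega⟩ t =
        V ⟨(t : ℕ) + 2, by omega⟩ := by
      simp only [remove2]
      apply app_congr
      try simp only [Fin.val_mk]
      split_ifs <;> omega
    rw [h2]
    simp only [hV, hu1, Fin.val_mk]
    by_cases h0 : (t : ℕ) = 0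
    · rw [if_neg (show ¬((t : ℕ) + 2 = 0) by omega), if_neg (show ¬((t : ℕ) + 2 = 1) by omega),
        if_pos (show (t : ℕ) + 2 = 2 by omega), if_pos h0]
    by_cases h1 : (t : ℕ) = 1
    · rw [if_neg (show ¬((t : ℕ) + 2 = 0) by omega), if_neg (show ¬((t : ℕ) + 2 = 1) by omega),
        if_neg (show ¬((t : ℕ) + 2 = 2) by omega), if_pos (show (t : ℕ) + 2 = 3 by omega),
        if_neg h0, if_pos h1]
    by_cases hl : (t : ℕ) = i - 1
    · rw [if_neg (show ¬((t : ℕ) + 2 = 0) by omega), if_neg (show ¬((t : ℕ) + 2 = 1) by omega),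
        if_neg (show ¬((t : ℕ) + 2 = 2) by omega), if_neg (show ¬((t : ℕ) + 2 = 3) by omega),
        if_pos (show (t : ℕ) + 2 = i + 1 by omega), if_neg h0, if_neg h1, if_pos hl]
    · rw [if_neg (show ¬((t : ℕ) + 2 = 0) by omega), if_neg (show ¬((t : ℕ) + 2 = 1) by omega),
        if_neg (show ¬((t : ℕ) + 2 = 2) by omega), if_neg (show ¬((t : ℕ) + 2 = 3) by omega),
        if_neg (show ¬((t : ℕ) + 2 = i + 1) by omega), if_neg h0, if_neg h1, if_neg hl]
      exact congrArg (aa g) (by rw [Fin.mk.injEq]; omega)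
  have hrB : remove2 V (⟨2, by omega⟩ : Fin (i + 2)) ⟨3, by omega⟩ = u2 := by
    funext t
    have ht := t.isLt
    by_cases hlt2 : (t : ℕ) < 2
    · have h2 : remove2 V (⟨2, by omega⟩ : Fin (i + 2)) ⟨3, by omega⟩ t =
          V ⟨(t : ℕ), by omega⟩ := by
        simp only [remove2]
        apply app_congr
        try simp only [Fin.val_mk]
        split_ifs <;> omega
      rw [h2]
      simp only [hV, hu2, Fin.val_mk]
      by_cases h0 : (t : ℕ) = 0
      · rw [if_pos h0, if_pos h0]
      · rw [if_neg h0, if_pos (show (t : ℕ) = 1 by omega), if_neg h0,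
          if_pos (show (t : ℕ) = 1 by omega)]
    · have h2 : remove2 V (⟨2, by omega⟩ : Fin (i + 2)) ⟨3, by omega⟩ t =
          V ⟨(t : ℕ) + 2, by omega⟩ := by
        simp only [remove2]
        apply app_congr
        try simp only [Fin.val_mk]
        split_ifs <;> omega
      rw [h2]
      simp only [hV, hu2, Fin.val_mk]
      by_cases hl : (t : ℕ) = i - 1
      · rw [if_neg (show ¬((t : ℕ) + 2 = 0) by omega), if_neg (show ¬((t : ℕ) + 2 = 1) by omega),
          if_neg (show ¬((t : ℕ) + 2 = 2) by omega), if_neg (show ¬((t : ℕ) + 2 = 3) by omega),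
          if_pos (show (t : ℕ) + 2 = i + 1 by omega), if_neg (show ¬((t : ℕ) = 0) by omega),
          if_neg (show ¬((t : ℕ) = 1) by omega), if_pos hl]
      · rw [if_neg (show ¬((t : ℕ) + 2 = 0) by omega), if_neg (show ¬((t : ℕ) + 2 = 1) by omega),
          if_neg (show ¬((t : ℕ) + 2 = 2) by omega), if_neg (show ¬((t : ℕ) + 2 = 3) by omega),
          if_neg (show ¬((t : ℕ) + 2 = i + 1) by omega), if_neg (show ¬((t : ℕ) = 0) by omega),
          if_neg (show ¬((t : ℕ) = 1) by omega), if_neg hl]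
        exact congrArg (aa g) (by rw [Fin.mk.injEq]; omega)
  have hrC : remove2 u1 (⟨0, by omega⟩ : Fin i) ⟨1, by omega⟩ = T := by
    funext t
    have ht := t.isLt
    have h2 : remove2 u1 (⟨0, by omega⟩ : Fin i) ⟨1, by omega⟩ t =
        u1 ⟨(t : ℕ) + 2, by omega⟩ := by
      simp only [remove2]
      apply app_congr
      try simp only [Fin.val_mk]
      split_ifs <;> omega
    rw [h2]
    simp only [hu1, hT, Fin.val_mk]
    by_cases hl : (t : ℕ) = i - 3
    · rw [if_neg (show ¬((t : ℕ) + 2 = 0) by omega), if_neg (show ¬((t : ℕ) + 2 = 1) by omega),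
        if_pos (show (t : ℕ) + 2 = i - 1 by omega), if_pos hl]
    · rw [if_neg (show ¬((t : ℕ) + 2 = 0) by omega), if_neg (show ¬((t : ℕ) + 2 = 1) by omega),
        if_neg (show ¬((t : ℕ) + 2 = i - 1) by omega), if_neg hl]
      exact congrArg (aa g) (by rw [Fin.mk.injEq]; omega)
  have hrD : remove2 u2 (⟨0, by omega⟩ : Fin i) ⟨1, by omega⟩ = T := by
    funext t
    have ht := t.isLt
    have h2 : remove2 u2 (⟨0, by omega⟩ : Fin i) ⟨1, by omega⟩ t =
        u2 ⟨(t : ℕ) + 2, by omega⟩ := by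
      simp only [remove2]
      apply app_congr
      try simp only [Fin.val_mk]
      split_ifs <;> omega
    rw [h2]
    simp only [hu2, hT, Fin.val_mk]
    by_cases hl : (t : ℕ) = i - 3
    · rw [if_neg (show ¬((t : ℕ) + 2 = 0) by omega), if_neg (show ¬((t : ℕ) + 2 = 1) by omega),
        if_pos (show (t : ℕ) + 2 = i - 1 by omega), if_pos hl]
    · rw [if_neg (show ¬((t : ℕ) + 2 = 0) by omega), if_neg (show ¬((t : ℕ) + 2 = 1) by omega),
        if_neg (show ¬((t : ℕ) + 2 = i - 1) by omega), if_neg hl]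
      exact congrArg (aa g) (by rw [Fin.mk.injEq]; omega)
  -- step 1 : C2
  have hs1 : C2 (wedge g (i + 2) V) = wedge g i u1 + wedge g i u2 := by
    rw [hC2 V, contract_two g (i + 2) (by omega) V hvanV]
    have e0 : V ⟨0, by omega⟩ = aa g ⟨0, by omega⟩ := by rw [hV]; rfl
    have e1 : V ⟨1, by omega⟩ = bb g ⟨0, by omega⟩ := by rw [hV]; rfl
    have e2 : V ⟨2, by omega⟩ = aa g ⟨g - 1, by omega⟩ := by rw [hV]; rfl
    have e3 : V ⟨3, by omega⟩ = bb g ⟨g - 1, by omega⟩ := by rw [hV]; rfl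
    rw [e0, e1, e2, e3, omg_aa_bb, omg_aa_bb, if_pos rfl, if_pos rfl, one_smul, one_smul]
    have hw1 : wedge g (i + 2 - 2) (remove2 V ⟨0, by omega⟩ ⟨1, by omega⟩) = wedge g i u1 :=
      congrArg (wedge g (i + 2 - 2)) hrA
    have hw2 : wedge g (i + 2 - 2) (remove2 V ⟨2, by omega⟩ ⟨3, by omega⟩) = wedge g i u2 :=
      congrArg (wedge g (i + 2 - 2)) hrB
    rw [hw1, hw2]
  -- step 2 : C1 on each summand
  have hs2 : C1 (wedge g i u1) = wedge g (i - 2) T := by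
    rw [hC1 u1, contract_one g i (by omega) u1 hvan1]
    have e0 : u1 ⟨0, by omega⟩ = aa g ⟨g - 1, by omega⟩ := by rw [hu1]; rfl
    have e1 : u1 ⟨1, by omega⟩ = bb g ⟨g - 1, by omega⟩ := by rw [hu1]; rfl
    rw [e0, e1, omg_aa_bb, if_pos rfl, one_smul]
    exact congrArg (wedge g (i - 2)) hrC
  have hs3 : C1 (wedge g i u2) = wedge g (i - 2) T := by
    rw [hC1 u2, contract_one g i (by omega) u2 hvan2]
    have e0 : u2 ⟨0, by omega⟩ = aa g ⟨0, by omega⟩ := by rw [hu2]; rfl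
    have e1 : u2 ⟨1, by omega⟩ = bb g ⟨0, by omega⟩ := by rw [hu2]; rfl
    rw [e0, e1, omg_aa_bb, if_pos rfl, one_smul]
    exact congrArg (wedge g (i - 2)) hrD
  have key : C1 (C2 (wedge g (i + 2) V)) = (2 : ℚ) • wedge g (i - 2) T := by
    rw [hs1, map_add, hs2, hs3, two_smul]
  -- nonvanishing
  have hTne : (2 : ℚ) • wedge g (i - 2) T ≠ 0 := by
    have hidx : T = fun t : Fin (i - 2) => Pi.single
        (if (t : ℕ) = i - 3 then Sum.inl (⟨g - 2, by omega⟩ : Fin g)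
         else Sum.inl ⟨(t : ℕ) + 1, by have := t.isLt; omega⟩) 1 := by
      funext t
      simp only [hT]
      split_ifs <;> rfl
    rw [hidx]
    refine smul_ne_zero two_ne_zero (wedge_ne_zero g (i - 2) _ ?_)
    intro s t h
    try dsimp only at h
    have hs := s.isLt
    have ht := t.isLt
    split_ifs at h with h1 h2 h2 <;>
      simp only [Sum.inl.injEq, Fin.mk.injEq] at h <;>
      exact Fin.ext (by omega)
  -- C0 kills the result
  have hvan0 : ∀ p : Fin (i - 2) × Fin (i - 2), (p.1 : ℕ) < (p.2 : ℕ) →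
      omg g (T p.1) (T p.2) = 0 := by
    intro p hlt
    simp only [hT]
    split_ifs <;> rw [omg_aa_aa]
  refine ⟨key, hTne, ?_⟩
  rw [key, map_smul, hC0 T, contract_zero g (i - 2) T hvan0, smul_zero]
end

section
/- Let T and T' be disjoint nonempty subsets of {1, …, g} and let s_1, …, s_k (k ≥ 0) be distinct elements of {1, …, g} \ (T ∪ T'). Then the element (Σ_{ℓ∈T} a_ℓ∧b_ℓ)∧(Σ_{ℓ'∈T'} a_{ℓ'}∧b_{ℓ'})∧a_{s_1}∧⋯∧a_{s_k} is nonzero in ⋀^{k+4} H. -/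
/-! ### Auxiliary material -/


lemma my_comp_append {α β : Sort*} {m n : ℕ} (f : α → β) (u : Fin m → α) (v : Fin n → α) :
    f ∘ Fin.append u v = Fin.append (f ∘ u) (f ∘ v) := by
  funext i
  refine Fin.addCases (fun l => ?_) (fun r => ?_) i <;>
    simp [Fin.append_left, Fin.append_right]

lemma my_iMulti_mul {R M : Type*} [CommRing R] [AddCommGroup M] [Module R M]
    (m n : ℕ) (v : Fin m → M) (w : Fin n → M) :
    ExteriorAlgebra.ιMulti R m v * ExteriorAlgebra.ιMulti R n w =
      ExteriorAlgebra.ιMulti R (m + n) (Fin.append v w) := by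
  rw [ExteriorAlgebra.ιMulti_apply, ExteriorAlgebra.ιMulti_apply,
    ExteriorAlgebra.ιMulti_apply, List.ofFn_add, List.prod_append]
  congr 1 <;> simp [Fin.append_left, Fin.append_right]

/-- The index family `(inl x, inr x, inl y, inr y, inl (s 0), …, inl (s (k-1)))`. -/
def idxFam (g k : ℕ) (x y : Fin g) (s : Fin k → Fin g) : Fin (2 + 2 + k) → (Fin g ⊕ Fin g) :=
  Fin.append (Fin.append ![Sum.inl x, Sum.inr x] ![Sum.inl y, Sum.inr y]) (fun t => Sum.inl (s t))

lemma idxFam_apply (g k : ℕ) (x y : Fin g) (s : Fin k → Fin g) (i : Fin (2 + 2 + k)) :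
    idxFam g k x y s i =
      if h : (i : ℕ) < 4 then
        (if (i : ℕ) = 0 then Sum.inl x else if (i : ℕ) = 1 then Sum.inr x
         else if (i : ℕ) = 2 then Sum.inl y else Sum.inr y)
      else Sum.inl (s ⟨(i : ℕ) - 4, by have := i.isLt; omega⟩) := by
  refine Fin.addCases (fun l => ?_) (fun r => ?_) i
  · rw [idxFam, Fin.append_left]
    have hv : ((Fin.castAdd k l : Fin (2+2+k)) : ℕ) = (l : ℕ) := rfl
    refine Fin.addCases (fun ll => ?_) (fun lr => ?_) l <;>
      · first
        | (rw [Fin.append_left]; fin_cases ll <;> simp)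
        | (rw [Fin.append_right]; fin_cases lr <;> simp)
  · rw [idxFam, Fin.append_right]
    have hv : ((Fin.natAdd (2+2) r : Fin (2+2+k)) : ℕ) = 4 + (r : ℕ) := rfl
    rw [dif_neg (by omega)]
    congr 1
    exact Fin.ext (by simp)

lemma idxFam_inj {g k : ℕ} {x y : Fin g} {s : Fin k → Fin g} (hxy : x ≠ y)
    (hs : Function.Injective s) (hsx : ∀ t, s t ≠ x) (hsy : ∀ t, s t ≠ y) :
    Function.Injective (idxFam g k x y s) := by
  intro i j hij
  rw [idxFam_apply, idxFam_apply] at hij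
  apply Fin.ext
  split_ifs at hij <;>
    first
      | omega
      | (simp_all; omega)
      | (simp only [Sum.inl.injEq, Sum.inr.injEq] at hij;
         first
           | (exact absurd hij hxy)
           | (exact absurd hij.symm hxy)
           | (exact absurd hij (hsx _))
           | (exact absurd hij.symm (hsx _))
           | (exact absurd hij (hsy _))
           | (exact absurd hij.symm (hsy _))
           | (have := hs hij; simp only [Fin.mk.injEq] at this; omega))

/-- The dual functional given by the determinant of coordinates at indices `c`. -/
noncomputable def dualD {I : Type*} [DecidableEq I] (n : ℕ) (c : Fin n → I) :
    (I → ℚ) [⋀^Fin n]→ₗ[ℚ] ℚ :=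
  (Matrix.detRowAlternating).compLinearMap (LinearMap.funLeft ℚ ℚ c)

lemma dualD_apply {I : Type*} [DecidableEq I] (n : ℕ) (c : Fin n → I) (v : Fin n → I → ℚ) :
    dualD n c v = Matrix.det (Matrix.of fun i j => v i (c j)) := rfl

lemma dualD_single_self {I : Type*} [DecidableEq I] (n : ℕ) (c : Fin n → I)
    (hc : Function.Injective c) :
    dualD n c (fun i => Pi.single (c i) (1 : ℚ)) = 1 := by
  rw [dualD_apply]
  have : (Matrix.of fun i j => (Pi.single (c i) (1:ℚ) : I → ℚ) (c j)) =
      (1 : Matrix (Fin n) (Fin n) ℚ) := by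
    ext i j
    rw [Matrix.of_apply, Pi.single_apply, Matrix.one_apply]
    by_cases h : i = j
    · simp [h]
    · rw [if_neg h, if_neg (fun hh => h (hc hh).symm)]
  rw [this, Matrix.det_one]

lemma dualD_single_zero {I : Type*} [DecidableEq I] (n : ℕ) (c : Fin n → I)
    (e : Fin n → I) (i₀ : Fin n) (h : ∀ j, c j ≠ e i₀) :
    dualD n c (fun i => Pi.single (e i) (1 : ℚ)) = 0 := by
  rw [dualD_apply]
  exact Matrix.det_eq_zero_of_row_eq_zero i₀ (fun j => by
    simp [Pi.single_apply, h j])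

lemma famV_eq (g k : ℕ) (x y : Fin g) (s : Fin k → Fin g) :
    Fin.append (Fin.append ![aa g x, bb g x] ![aa g y, bb g y]) (fun t => aa g (s t)) =
      fun i => Pi.single (idxFam g k x y s i) (1 : ℚ) := by
  have h1 : ∀ z : Fin g, ![aa g z, bb g z] =
      (fun w => (Pi.single w (1:ℚ) : (Fin g ⊕ Fin g) → ℚ)) ∘ ![Sum.inl z, Sum.inr z] := by
    intro z; funext i; fin_cases i <;> rfl
  show _ = (fun w => (Pi.single w (1:ℚ) : (Fin g ⊕ Fin g) → ℚ)) ∘ idxFam g k x y s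
  rw [idxFam, my_comp_append, my_comp_append, h1, h1]
  rfl
/-- Let `T` and `T'` be disjoint nonempty subsets of `{1, …, g}` and let
`s_1, …, s_k` (`k ≥ 0`) be distinct elements of `{1, …, g} \ (T ∪ T')`.  Then
`(Σ_{ℓ∈T} a_ℓ∧b_ℓ)∧(Σ_{ℓ'∈T'} a_{ℓ'}∧b_{ℓ'})∧a_{s_1}∧⋯∧a_{s_k}` is nonzero in `⋀^{k+4} H`
(the element is computed in the exterior algebra of `H`, where `⋀^{k+4} H` lives). -/
theorem statement13 (g : ℕ) (hg : 2 ≤ g) (T T' : Finset (Fin g))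
    (hT : T.Nonempty) (hT' : T'.Nonempty) (hTT' : Disjoint T T')
    (k : ℕ) (s : Fin k → Fin g) (hs : Function.Injective s)
    (hsT : ∀ t, s t ∉ T) (hsT' : ∀ t, s t ∉ T') :
    (∑ ℓ ∈ T, ExteriorAlgebra.ιMulti ℚ 2 ![aa g ℓ, bb g ℓ]) *
      (∑ ℓ ∈ T', ExteriorAlgebra.ιMulti ℚ 2 ![aa g ℓ, bb g ℓ]) *
      ExteriorAlgebra.ιMulti ℚ k (fun t => aa g (s t)) ≠ 0 := by
  classical
  obtain ⟨x, hx⟩ := hT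
  obtain ⟨y, hy⟩ := hT'
  have hxy : x ≠ y := fun h => (Finset.disjoint_left.mp hTT' hx) (h ▸ hy)
  intro hzero
  set c := idxFam g k x y s with hc
  set D : ∀ i, (HH g) [⋀^Fin i]→ₗ[ℚ] ℚ :=
    Function.update (fun i => (0 : (HH g) [⋀^Fin i]→ₗ[ℚ] ℚ)) (2 + 2 + k)
      (dualD (2 + 2 + k) c) with hD
  have hel : (∑ ℓ ∈ T, ExteriorAlgebra.ιMulti ℚ 2 ![aa g ℓ, bb g ℓ]) *
      (∑ ℓ ∈ T', ExteriorAlgebra.ιMulti ℚ 2 ![aa g ℓ, bb g ℓ]) *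
      ExteriorAlgebra.ιMulti ℚ k (fun t => aa g (s t)) =
      ∑ ℓ ∈ T, ∑ ℓ' ∈ T',
        ExteriorAlgebra.ιMulti ℚ (2 + 2 + k)
          (fun i => Pi.single (idxFam g k ℓ ℓ' s i) (1 : ℚ)) := by
    rw [Finset.sum_mul_sum, Finset.sum_mul]
    refine Finset.sum_congr rfl fun ℓ _ => ?_
    rw [Finset.sum_mul]
    refine Finset.sum_congr rfl fun ℓ' _ => ?_
    rw [my_iMulti_mul, my_iMulti_mul, famV_eq]
  rw [hel] at hzero
  have hmap := congrArg (ExteriorAlgebra.liftAlternating D) hzero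
  rw [map_zero, map_sum] at hmap
  simp only [map_sum, ExteriorAlgebra.liftAlternating_apply_ιMulti] at hmap
  have hDval : D (2 + 2 + k) = dualD (2 + 2 + k) c := by
    rw [hD, Function.update_self]
  have hterm : ∀ ℓ ∈ T, ∀ ℓ' ∈ T',
      D (2 + 2 + k) (fun i => Pi.single (idxFam g k ℓ ℓ' s i) (1:ℚ)) =
        if ℓ = x ∧ ℓ' = y then 1 else 0 := by
    intro ℓ hℓ ℓ' hℓ'
    rw [hDval]
    have hxl' : ℓ' ≠ x := fun h => (Finset.disjoint_left.mp hTT' hx) (h ▸ hℓ')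
    have hℓy : ℓ ≠ y := fun h => (Finset.disjoint_left.mp hTT' hℓ) (h ▸ hy)
    by_cases h1 : ℓ = x
    · by_cases h2 : ℓ' = y
      · subst h1; subst h2
        rw [if_pos ⟨rfl, rfl⟩]
        exact dualD_single_self _ c (idxFam_inj hxy hs
          (fun t ht => hsT t (by rw [ht]; exact hx))
          (fun t ht => hsT' t (by rw [ht]; exact hy)))
      · rw [if_neg (by tauto)]
        refine dualD_single_zero _ c _ ⟨3, by omega⟩ ?_
        intro j
        have he : idxFam g k ℓ ℓ' s ⟨3, by omega⟩ = Sum.inr ℓ' := by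
          rw [idxFam_apply]; norm_num
        rw [he, hc, idxFam_apply]
        split_ifs <;> intro hcontra <;>
          first
            | exact Sum.inl_ne_inr hcontra
            | exact hxl' (Sum.inr.inj hcontra).symm
            | exact h2 (Sum.inr.inj hcontra).symm
    · rw [if_neg (by tauto)]
      refine dualD_single_zero _ c _ ⟨1, by omega⟩ ?_
      intro j
      have he : idxFam g k ℓ ℓ' s ⟨1, by omega⟩ = Sum.inr ℓ := by
        rw [idxFam_apply]; norm_num
      rw [he, hc, idxFam_apply]
      split_ifs <;> intro hcontra <;>
        first
          | exact Sum.inl_ne_inr hcontra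
          | exact h1 (Sum.inr.inj hcontra).symm
          | exact hℓy (Sum.inr.inj hcontra).symm
  have hsum : ∑ ℓ ∈ T, ∑ ℓ' ∈ T', (if ℓ = x ∧ ℓ' = y then (1:ℚ) else 0) = 1 := by
    have inner : ∀ ℓ, (∑ ℓ' ∈ T', (if ℓ = x ∧ ℓ' = y then (1:ℚ) else 0)) =
        if ℓ = x then 1 else 0 := by
      intro ℓ
      by_cases h : ℓ = x
      · subst h
        simp only [true_and]
        rw [Finset.sum_ite_eq' T' y (fun _ => (1:ℚ)), if_pos hy]
        simp
      · simp [h]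
    rw [Finset.sum_congr rfl fun ℓ _ => inner ℓ,
      Finset.sum_ite_eq' T x (fun _ => (1:ℚ)), if_pos hx]
  rw [Finset.sum_congr rfl (fun ℓ hℓ => Finset.sum_congr rfl
    fun ℓ' hℓ' => hterm ℓ hℓ ℓ' hℓ'), hsum] at hmap
  exact one_ne_zero hmap
end

section
/- Let k ≥ 1 and let 1 < ℓ_1 < ℓ_2 < ⋯ < ℓ_k < g be indices in {1, …, g}, and set c = a_{ℓ_1}∧⋯∧a_{ℓ_k} ∈ ⋀^k H. For each ordered pair (ℓ, ℓ') of distinct elements of {1, …, g} \ {ℓ_1, …, ℓ_k}, define ε_{ℓ,ℓ'} = Π_{i=1}^k ε_i, where ε_i = 1 if ℓ < ℓ_i < ℓ', ε_i = −1 if ℓ' < ℓ_i < ℓ, and ε_i = 0 otherwise. Set ω_0 = Σ_{ℓ < ℓ_1} a_ℓ∧b_ℓ and ω^0 = Σ_{ℓ' > ℓ_k} a_{ℓ'}∧b_{ℓ'}. Then Σ_{(ℓ,ℓ')} ε_{ℓ,ℓ'} · a_ℓ∧b_ℓ∧a_{ℓ'}∧b_{ℓ'}∧c = (1 + (−1)^k)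 · ω_0∧ω^0∧c in ⋀^{k+4} H, where the sum is over all ordered pairs (ℓ, ℓ') of distinct elements of {1, …, g} \ {ℓ_1, …, ℓ_k}. In particular this sum vanishes when k is odd, and equals 2·ω_0∧ω^0∧c when k is even. -/
lemma mul2_aux (g : ℕ) (x y z w : HH g) :
    ExteriorAlgebra.ιMulti ℚ 2 ![x, y] * ExteriorAlgebra.ιMulti ℚ 2 ![z, w] =
      ExteriorAlgebra.ιMulti ℚ 4 ![x, y, z, w] := by
  simp [ExteriorAlgebra.ιMulti_apply, List.ofFn_succ, mul_assoc]

lemma swap4_aux (g : ℕ) (x y z w : HH g) :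
    ExteriorAlgebra.ιMulti ℚ 4 ![z, w, x, y] = ExteriorAlgebra.ιMulti ℚ 4 ![x, y, z, w] := by
  set σ : Equiv.Perm (Fin 4) := Equiv.swap 0 2 * Equiv.swap 1 3 with hσ
  have h := AlternatingMap.map_perm (ExteriorAlgebra.ιMulti ℚ 4 (M := HH g)) ![x,y,z,w] σ
  have e0 : σ 0 = 2 := by decide
  have e1 : σ 1 = 3 := by decide
  have e2 : σ 2 = 0 := by decide
  have e3 : σ 3 = 1 := by decide
  have hv : (![x,y,z,w] ∘ σ) = ![z,w,x,y] := by
    funext i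
    fin_cases i
    · show ![x,y,z,w] (σ 0) = z; rw [e0]; rfl
    · show ![x,y,z,w] (σ 1) = w; rw [e1]; rfl
    · show ![x,y,z,w] (σ 2) = x; rw [e2]; rfl
    · show ![x,y,z,w] (σ 3) = y; rw [e3]; rfl
  have hs : Equiv.Perm.sign σ = 1 := by decide
  rw [hv, hs, one_smul] at h
  exact h

/-- Let `k ≥ 1` and let `1 < ℓ_1 < ⋯ < ℓ_k < g` (here encoded 0-based by a
strictly monotone `L : Fin k → Fin g` with `0 < L t < g - 1`), and set
`c = a_{ℓ_1}∧⋯∧a_{ℓ_k}`.  For each ordered pair `(ℓ, ℓ')` of distinct elements of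
`{1, …, g} \ {ℓ_1, …, ℓ_k}`, let `ε_{ℓ,ℓ'} = Π_i ε_i` with `ε_i = 1` if `ℓ < ℓ_i < ℓ'`,
`ε_i = -1` if `ℓ' < ℓ_i < ℓ`, and `ε_i = 0` otherwise.  With
`ω_0 = Σ_{ℓ < ℓ_1} a_ℓ∧b_ℓ` and `ω^0 = Σ_{ℓ' > ℓ_k} a_{ℓ'}∧b_{ℓ'}`, one has
`Σ_{(ℓ,ℓ')} ε_{ℓ,ℓ'} · a_ℓ∧b_ℓ∧a_{ℓ'}∧b_{ℓ'}∧c = (1 + (-1)^k) · ω_0∧ω^0∧c`;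
in particular the sum vanishes when `k` is odd and equals `2·ω_0∧ω^0∧c` when `k` is even. -/
theorem statement14 (g : ℕ) (hg : 2 ≤ g) (k : ℕ) (hk : 1 ≤ k)
    (L : Fin k → Fin g) (hLmono : StrictMono L)
    (hL1 : ∀ t, 0 < (L t : ℕ)) (hL2 : ∀ t, (L t : ℕ) < g - 1) :
    (∑ p ∈ Finset.univ.filter (fun p : Fin g × Fin g =>
          p.1 ≠ p.2 ∧ (∀ t, p.1 ≠ L t) ∧ (∀ t, p.2 ≠ L t)),
        (∏ t : Fin k, if (p.1 : ℕ) < (L t : ℕ) ∧ (L t : ℕ) < (p.2 : ℕ) then (1 : ℚ)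
            else if (p.2 : ℕ) < (L t : ℕ) ∧ (L t : ℕ) < (p.1 : ℕ) then -1 else 0) •
          (ExteriorAlgebra.ιMulti ℚ 4 ![aa g p.1, bb g p.1, aa g p.2, bb g p.2] *
            ExteriorAlgebra.ιMulti ℚ k (fun t => aa g (L t))) =
      (1 + (-1 : ℚ) ^ k) •
        ((∑ ℓ ∈ Finset.univ.filter (fun ℓ : Fin g => ∀ t, (ℓ : ℕ) < (L t : ℕ)),
            ExteriorAlgebra.ιMulti ℚ 2 ![aa g ℓ, bb g ℓ]) *
          (∑ ℓ ∈ Finset.univ.filter (fun ℓ : Fin g => ∀ t, (L t : ℕ) < (ℓ : ℕ)),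
            ExteriorAlgebra.ιMulti ℚ 2 ![aa g ℓ, bb g ℓ]) *
          ExteriorAlgebra.ιMulti ℚ k (fun t => aa g (L t)))) ∧
    (Odd k →
      ∑ p ∈ Finset.univ.filter (fun p : Fin g × Fin g =>
          p.1 ≠ p.2 ∧ (∀ t, p.1 ≠ L t) ∧ (∀ t, p.2 ≠ L t)),
        (∏ t : Fin k, if (p.1 : ℕ) < (L t : ℕ) ∧ (L t : ℕ) < (p.2 : ℕ) then (1 : ℚ)
            else if (p.2 : ℕ) < (L t : ℕ) ∧ (L t : ℕ) < (p.1 : ℕ) then -1 else 0) •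
          (ExteriorAlgebra.ιMulti ℚ 4 ![aa g p.1, bb g p.1, aa g p.2, bb g p.2] *
            ExteriorAlgebra.ιMulti ℚ k (fun t => aa g (L t))) = 0) ∧
    (Even k →
      ∑ p ∈ Finset.univ.filter (fun p : Fin g × Fin g =>
          p.1 ≠ p.2 ∧ (∀ t, p.1 ≠ L t) ∧ (∀ t, p.2 ≠ L t)),
        (∏ t : Fin k, if (p.1 : ℕ) < (L t : ℕ) ∧ (L t : ℕ) < (p.2 : ℕ) then (1 : ℚ)
            else if (p.2 : ℕ) < (L t : ℕ) ∧ (L t : ℕ) < (p.1 : ℕ) then -1 else 0) •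
          (ExteriorAlgebra.ιMulti ℚ 4 ![aa g p.1, bb g p.1, aa g p.2, bb g p.2] *
            ExteriorAlgebra.ιMulti ℚ k (fun t => aa g (L t))) =
      (2 : ℚ) •
        ((∑ ℓ ∈ Finset.univ.filter (fun ℓ : Fin g => ∀ t, (ℓ : ℕ) < (L t : ℕ)),
            ExteriorAlgebra.ιMulti ℚ 2 ![aa g ℓ, bb g ℓ]) *
          (∑ ℓ ∈ Finset.univ.filter (fun ℓ : Fin g => ∀ t, (L t : ℕ) < (ℓ : ℕ)),
            ExteriorAlgebra.ιMulti ℚ 2 ![aa g ℓ, bb g ℓ]) *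
          ExteriorAlgebra.ιMulti ℚ k (fun t => aa g (L t)))) := by
  classical
  set t0 : Fin k := ⟨0, hk⟩ with ht0
  set c := ExteriorAlgebra.ιMulti ℚ k (fun t => aa g (L t)) with hc
  set f : Fin g × Fin g → ℚ := fun p =>
    ∏ t : Fin k, if (p.1 : ℕ) < (L t : ℕ) ∧ (L t : ℕ) < (p.2 : ℕ) then (1 : ℚ)
      else if (p.2 : ℕ) < (L t : ℕ) ∧ (L t : ℕ) < (p.1 : ℕ) then -1 else 0 with hf
  set W : Fin g × Fin g → ExteriorAlgebra ℚ (HH g) := fun p =>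
    ExteriorAlgebra.ιMulti ℚ 4 ![aa g p.1, bb g p.1, aa g p.2, bb g p.2] * c with hW
  set A1 := Finset.univ.filter (fun ℓ : Fin g => ∀ t, (ℓ : ℕ) < (L t : ℕ)) with hA1
  set A2 := Finset.univ.filter (fun ℓ : Fin g => ∀ t, (L t : ℕ) < (ℓ : ℕ)) with hA2
  set S := Finset.univ.filter (fun p : Fin g × Fin g =>
      p.1 ≠ p.2 ∧ (∀ t, p.1 ≠ L t) ∧ (∀ t, p.2 ≠ L t)) with hS
  have hmemA : ∀ p : Fin g × Fin g, p ∈ A1 ×ˢ A2 ↔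
      ((∀ t, (p.1 : ℕ) < (L t : ℕ)) ∧ ∀ t, (L t : ℕ) < (p.2 : ℕ)) := by
    intro p
    simp [hA1, hA2, Finset.mem_product, Finset.mem_filter]
  have hmemB : ∀ p : Fin g × Fin g, p ∈ A2 ×ˢ A1 ↔
      ((∀ t, (L t : ℕ) < (p.1 : ℕ)) ∧ ∀ t, (p.2 : ℕ) < (L t : ℕ)) := by
    intro p
    simp [hA1, hA2, Finset.mem_product, Finset.mem_filter]
  have hfA : ∀ p ∈ A1 ×ˢ A2, f p = 1 := by
    intro p hp
    rw [hmemA] at hp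
    refine Finset.prod_eq_one fun t _ => ?_
    rw [if_pos ⟨hp.1 t, hp.2 t⟩]
  have hfB : ∀ p ∈ A2 ×ˢ A1, f p = (-1 : ℚ) ^ k := by
    intro p hp
    rw [hmemB] at hp
    simp only [hf]
    have : ∀ t ∈ (Finset.univ : Finset (Fin k)),
        (if (p.1 : ℕ) < (L t : ℕ) ∧ (L t : ℕ) < (p.2 : ℕ) then (1 : ℚ)
          else if (p.2 : ℕ) < (L t : ℕ) ∧ (L t : ℕ) < (p.1 : ℕ) then -1 else 0) = -1 := by
      intro t _
      have h1 := hp.1 t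
      have h2 := hp.2 t
      rw [if_neg (by omega), if_pos ⟨h2, h1⟩]
    rw [Finset.prod_congr rfl this, Finset.prod_const, Finset.card_univ, Fintype.card_fin]
  have hf0 : ∀ p : Fin g × Fin g, f p ≠ 0 → p ∈ A1 ×ˢ A2 ∪ A2 ×ˢ A1 := by
    intro p hp
    have hfac : ∀ t : Fin k, ((p.1 : ℕ) < (L t : ℕ) ∧ (L t : ℕ) < (p.2 : ℕ)) ∨
        ((p.2 : ℕ) < (L t : ℕ) ∧ (L t : ℕ) < (p.1 : ℕ)) := by
      intro t
      have h := Finset.prod_ne_zero_iff.mp hp t (Finset.mem_univ t)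
      split_ifs at h with h1 h2
      · exact Or.inl h1
      · exact Or.inr h2
      · exact absurd rfl h
    rcases hfac t0 with h | h
    · refine Finset.mem_union_left _ ((hmemA p).mpr ⟨fun t => ?_, fun t => ?_⟩)
      · rcases hfac t with h' | h'
        · exact h'.1
        · omega
      · rcases hfac t with h' | h'
        · exact h'.2
        · omega
    · refine Finset.mem_union_right _ ((hmemB p).mpr ⟨fun t => ?_, fun t => ?_⟩)
      · rcases hfac t with h' | h'
        · omega
        · exact h'.2
      · rcases hfac t with h' | h'
        · omega
        · exact h'.1
  have hsub : A1 ×ˢ A2 ∪ A2 ×ˢ A1 ⊆ S := by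
    intro p hp
    simp only [hS, Finset.mem_filter, Finset.mem_univ, true_and]
    rcases Finset.mem_union.mp hp with h | h
    · rw [hmemA] at h
      have h1 := h.1 t0
      have h2 := h.2 t0
      exact ⟨Fin.ne_of_val_ne (by omega),
        fun t => Fin.ne_of_val_ne (by have := h.1 t; omega),
        fun t => Fin.ne_of_val_ne (by have := h.2 t; omega)⟩
    · rw [hmemB] at h
      have h1 := h.1 t0
      have h2 := h.2 t0
      exact ⟨Fin.ne_of_val_ne (by omega),
        fun t => Fin.ne_of_val_ne (by have := h.1 t; omega),
        fun t => Fin.ne_of_val_ne (by have := h.2 t; omega)⟩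
  have hdisj : Disjoint (A1 ×ˢ A2) (A2 ×ˢ A1) := by
    rw [Finset.disjoint_left]
    intro p hp hp'
    rw [hmemA] at hp
    rw [hmemB] at hp'
    have := hp.1 t0
    have := hp'.1 t0
    omega
  have key : ∑ p ∈ S, f p • W p =
      (1 + (-1 : ℚ) ^ k) • ((∑ ℓ ∈ A1, ExteriorAlgebra.ιMulti ℚ 2 ![aa g ℓ, bb g ℓ]) *
        (∑ ℓ ∈ A2, ExteriorAlgebra.ιMulti ℚ 2 ![aa g ℓ, bb g ℓ]) * c) := by
    have e1 : ∑ p ∈ S, f p • W p = ∑ p ∈ A1 ×ˢ A2 ∪ A2 ×ˢ A1, f p • W p := by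
      refine (Finset.sum_subset hsub fun x _ hnx => ?_).symm
      have : f x = 0 := by
        by_contra h
        exact hnx (hf0 x h)
      rw [this, zero_smul]
    have e3 : ∑ p ∈ A1 ×ˢ A2, f p • W p = ∑ p ∈ A1 ×ˢ A2, W p :=
      Finset.sum_congr rfl fun p hp => by rw [hfA p hp, one_smul]
    have e4 : ∑ p ∈ A2 ×ˢ A1, f p • W p = (-1 : ℚ) ^ k • ∑ p ∈ A1 ×ˢ A2, W p := by
      rw [Finset.smul_sum]
      refine Finset.sum_equiv (Equiv.prodComm (Fin g) (Fin g)) (fun p => ?_) (fun p hp => ?_)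
      · rw [hmemB, hmemA]
        exact ⟨fun h => ⟨h.2, h.1⟩, fun h => ⟨h.2, h.1⟩⟩
      · rw [hfB p hp]
        congr 1
        show W p = W (p.2, p.1)
        simp only [hW]
        rw [swap4_aux]
    have e5 : (∑ ℓ ∈ A1, ExteriorAlgebra.ιMulti ℚ 2 ![aa g ℓ, bb g ℓ]) *
        (∑ ℓ ∈ A2, ExteriorAlgebra.ιMulti ℚ 2 ![aa g ℓ, bb g ℓ]) * c =
        ∑ p ∈ A1 ×ˢ A2, W p := by
      rw [Finset.sum_mul_sum, Finset.sum_mul, Finset.sum_product]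
      refine Finset.sum_congr rfl fun ℓ _ => ?_
      rw [Finset.sum_mul]
      refine Finset.sum_congr rfl fun ℓ' _ => ?_
      simp only [hW]
      rw [mul2_aux]
    rw [e1, Finset.sum_union hdisj, e3, e4, e5, add_smul, one_smul]
  refine ⟨key, fun hodd => ?_, fun heven => ?_⟩
  · rw [key, hodd.neg_one_pow]
    norm_num
  · rw [key, heven.neg_one_pow]
    norm_num
end
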